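/- For every finite graph G = (V, E) and every k ∈ ℕ, if the formula f(V,E,k) is an atomic-level instance of a normal binary tautology, then G has a vertex cover of size at most k. -/

import Mathlib

namespace CirquentCalc

/-- Formulas: literals (negation applied only to atoms), ∧, ∨. -/
inductive Fml where
  | pos : ℕ → Fml
  | neg : ℕ → Fml
  | and : Fml → Fml → Fml
  | or : Fml → Fml → Fml
deriving DecidableEq

namespace Fml

/-- Negation (pushed to atoms, as ¬ applies only to atoms). -/
def negate : Fml → Fml
  | pos n => neg n
  | neg n => pos n
  | and a b => or a.negate b.negate
  | or a b => and a.negate b.negate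

/-- Substitution extended homomorphically. -/
def subst (σ : ℕ → Fml) : Fml → Fml
  | pos n => σ n
  | neg n => (σ n).negate
  | and a b => and (a.subst σ) (b.subst σ)
  | or a b => or (a.subst σ) (b.subst σ)

/-- Classical evaluation under a truth assignment. -/
def eval (v : ℕ → Bool) : Fml → Bool
  | pos n => v n
  | neg n => !(v n)
  | and a b => a.eval v && b.eval v
  | or a b => a.eval v || b.eval v

/-- Number of positive occurrences of atom `a`. -/
def cPos (a : ℕ) : Fml → ℕ
  | pos n => if n = a then 1 else 0
  | neg _ => 0
  | and f g => f.cPos a + g.cPos a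
  | or f g => f.cPos a + g.cPos a

/-- Number of negative occurrences of atom `a`. -/
def cNeg (a : ℕ) : Fml → ℕ
  | pos _ => 0
  | neg n => if n = a then 1 else 0
  | and f g => f.cNeg a + g.cNeg a
  | or f g => f.cNeg a + g.cNeg a

/-- Total number of positive occurrences of atoms. -/
def posOcc : Fml → ℕ
  | pos _ => 1
  | neg _ => 0
  | and f g => f.posOcc + g.posOcc
  | or f g => f.posOcc + g.posOcc

/-- Length: total number of occurrences of literals and connectives. -/
def len : Fml → ℕ
  | pos _ => 1
  | neg _ => 1
  | and f g => f.len + g.len + 1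
  | or f g => f.len + g.len + 1

/-- Number of occurrences of ∧. -/
def nAnd : Fml → ℕ
  | pos _ => 0
  | neg _ => 0
  | and f g => f.nAnd + g.nAnd + 1
  | or f g => f.nAnd + g.nAnd

/-- Number of occurrences of ∨. -/
def nOr : Fml → ℕ
  | pos _ => 0
  | neg _ => 0
  | and f g => f.nOr + g.nOr
  | or f g => f.nOr + g.nOr + 1

end Fml

def Tautology (A : Fml) : Prop := ∀ v, A.eval v = true

/-- No atom has more than two occurrences. -/
def Binary (A : Fml) : Prop := ∀ a, A.cPos a + A.cNeg a ≤ 2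

/-- Whenever an atom occurs twice, one occurrence is positive and one negative. -/
def Normal (A : Fml) : Prop := ∀ a, A.cPos a ≤ 1 ∧ A.cNeg a ≤ 1

def AtomicLevel (σ : ℕ → Fml) : Prop := ∀ n, ∃ m, σ n = Fml.pos m

/-- `F` is an instance of `B`: σ(B) = F for some substitution σ. -/
def InstanceOf (F B : Fml) : Prop := ∃ σ, B.subst σ = F

/-- `F` is an atomic-level instance of `B`. -/
def AtomicInstanceOf (F B : Fml) : Prop := ∃ σ, AtomicLevel σ ∧ B.subst σ = F

/-- A cirquent: a pool of (occurrences of) formulas, and a list of ogroups,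
each an (index-)set of oformulas of the pool. -/
structure Cirquent where
  pool : List Fml
  groups : List (Finset ℕ)

def emptyCirquent : Cirquent := ⟨[], []⟩

def idCirquent (F : Fml) : Cirquent := ⟨[F.negate, F], [{0, 1}]⟩

/-- The cirquent with pool ⟨F⟩ and one ogroup containing F. -/
def fmlCirquent (F : Fml) : Cirquent := ⟨[F], [{0}]⟩

/-- Index renaming swapping `i` and `i+1`. -/
def swapIdx (i : ℕ) : ℕ → ℕ := fun j => if j = i then i + 1 else if j = i + 1 then i else j

/-- Index renaming when a new oformula is inserted at position `i`. -/
def insShift (i : ℕ) : ℕ → ℕ := fun j => if j < i then j else j + 1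

/-- Index renaming when the oformulas at positions `i`, `i+1` are merged into one at `i`. -/
def mergeIdx (i : ℕ) : ℕ → ℕ := fun j => if j ≤ i then j else j - 1

/-- Mix: placing the two premise cirquents side by side. -/
def MixStep (A B C : Cirquent) : Prop :=
  C.pool = A.pool ++ B.pool ∧
  C.groups = A.groups ++ B.groups.map (Finset.image (· + A.pool.length))

/-- Oformula exchange: swap two adjacent oformulas, preserving containment. -/
def OfExchStep (P C : Cirquent) : Prop :=
  ∃ (l₁ l₂ : List Fml) (F G : Fml),
    P.pool = l₁ ++ F :: G :: l₂ ∧ C.pool = l₁ ++ G :: F :: l₂ ∧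
    C.groups = P.groups.map (Finset.image (swapIdx l₁.length))

/-- Ogroup exchange: swap two adjacent ogroups. -/
def OgExchStep (P C : Cirquent) : Prop :=
  C.pool = P.pool ∧
  ∃ (g₁ g₂ : List (Finset ℕ)) (Γ Δ : Finset ℕ),
    P.groups = g₁ ++ Γ :: Δ :: g₂ ∧ C.groups = g₁ ++ Δ :: Γ :: g₂

/-- Pool weakening: insert a new oformula, contained in no ogroup. -/
def PoolWeakStep (P C : Cirquent) : Prop :=
  ∃ (l₁ l₂ : List Fml) (F : Fml),
    P.pool = l₁ ++ l₂ ∧ C.pool = l₁ ++ F :: l₂ ∧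
    C.groups = P.groups.map (Finset.image (insShift l₁.length))

/-- Ogroup weakening: add a new arc between a pre-existing ogroup and oformula. -/
def OgWeakStep (P C : Cirquent) : Prop :=
  C.pool = P.pool ∧
  ∃ (g₁ g₂ : List (Finset ℕ)) (Γ : Finset ℕ) (j : ℕ),
    j < P.pool.length ∧ j ∉ Γ ∧
    P.groups = g₁ ++ Γ :: g₂ ∧ C.groups = g₁ ++ insert j Γ :: g₂

/-- Downward duplication: replace an ogroup by two adjacent copies of it. -/
def DupDownStep (P C : Cirquent) : Prop :=
  C.pool = P.pool ∧
  ∃ (g₁ g₂ : List (Finset ℕ)) (Γ : Finset ℕ),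
    P.groups = g₁ ++ Γ :: g₂ ∧ C.groups = g₁ ++ Γ :: Γ :: g₂

/-- Upward duplication: the converse of downward duplication. -/
def DupUpStep (P C : Cirquent) : Prop :=
  C.pool = P.pool ∧
  ∃ (g₁ g₂ : List (Finset ℕ)) (Γ : Finset ℕ),
    P.groups = g₁ ++ Γ :: Γ :: g₂ ∧ C.groups = g₁ ++ Γ :: g₂

/-- ∨-introduction: merge two adjacent oformulas F, G into F ∨ G. -/
def OrIntroStep (P C : Cirquent) : Prop :=
  ∃ (l₁ l₂ : List Fml) (F G : Fml),
    P.pool = l₁ ++ F :: G :: l₂ ∧ C.pool = l₁ ++ (Fml.or F G) :: l₂ ∧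
    C.groups = P.groups.map (Finset.image (mergeIdx l₁.length))

/-- The merging of the ogroup list in ∧-introduction: no ogroup contains both `i`
and `i+1`; every ogroup containing `i` is immediately followed by one containing
`i+1` and vice versa; such pairs are merged. -/
inductive AndMerge (i : ℕ) : List (Finset ℕ) → List (Finset ℕ) → Prop where
  | nil : AndMerge i [] []
  | skip {Γ : Finset ℕ} {l l' : List (Finset ℕ)} :
      i ∉ Γ → (i + 1) ∉ Γ → AndMerge i l l' → AndMerge i (Γ :: l) (Γ :: l')
  | merge {Γ Δ : Finset ℕ} {l l' : List (Finset ℕ)} :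
      i ∈ Γ → (i + 1) ∉ Γ → (i + 1) ∈ Δ → i ∉ Δ →
      AndMerge i l l' → AndMerge i (Γ :: Δ :: l) ((Γ ∪ Δ) :: l')

/-- ∧-introduction. -/
def AndIntroStep (P C : Cirquent) : Prop :=
  ∃ (l₁ l₂ : List Fml) (F G : Fml) (merged : List (Finset ℕ)),
    P.pool = l₁ ++ F :: G :: l₂ ∧ C.pool = l₁ ++ (Fml.and F G) :: l₂ ∧
    AndMerge l₁.length P.groups merged ∧
    C.groups = merged.map (Finset.image (mergeIdx l₁.length))

inductive RuleName where
  | emptyAx | idAx | mix | ofExch | ogExch | poolWeak | ogWeak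
  | dupDown | dupUp | orIntro | andIntro
deriving DecidableEq

/-- The unary (one-premise) rules, by name. -/
def unRel : RuleName → Cirquent → Cirquent → Prop
  | .ofExch => OfExchStep
  | .ogExch => OgExchStep
  | .poolWeak => PoolWeakStep
  | .ogWeak => OgWeakStep
  | .dupDown => DupDownStep
  | .dupUp => DupUpStep
  | .orIntro => OrIntroStep
  | .andIntro => AndIntroStep
  | _ => fun _ _ => False

/-- Proof trees: each node is labeled by its cirquent and the rule used. -/
inductive PTree where
  | leaf (C : Cirquent) (r : RuleName)
  | un (C : Cirquent) (r : RuleName) (p : PTree)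
  | bin (C : Cirquent) (r : RuleName) (p q : PTree)

namespace PTree

def concl : PTree → Cirquent
  | leaf C _ => C
  | un C _ _ => C
  | bin C _ _ _ => C

/-- Validity: each node follows from its children by the named rule. -/
def Valid : PTree → Prop
  | leaf C r =>
      (r = .emptyAx ∧ C = emptyCirquent) ∨ (r = .idAx ∧ ∃ F, C = idCirquent F)
  | un C r p => p.Valid ∧ unRel r p.concl C
  | bin C r p q => p.Valid ∧ q.Valid ∧ r = .mix ∧ MixStep p.concl q.concl C

/-- Number of applications of rule `r` in the proof. -/
def count (r : RuleName) : PTree → ℕ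
  | leaf _ r' => if r' = r then 1 else 0
  | un _ r' p => (if r' = r then 1 else 0) + p.count r
  | bin _ r' p q => (if r' = r then 1 else 0) + p.count r + q.count r

/-- The cirquents occurring in the proof. -/
def cirquents : PTree → List Cirquent
  | leaf C _ => [C]
  | un C _ p => C :: p.cirquents
  | bin C _ p q => C :: (p.cirquents ++ q.cirquents)

/-- Total number of rule applications (nodes). -/
def nodes : PTree → ℕ
  | leaf _ _ => 1
  | un _ _ p => p.nodes + 1
  | bin _ _ p q => p.nodes + q.nodes + 1

/-- Number of leaves of the proof tree. -/
def leavesCount : PTree → ℕ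
  | leaf _ _ => 1
  | un _ _ p => p.leavesCount
  | bin _ _ p q => p.leavesCount + q.leavesCount

end PTree

/-- A proof uses no duplication. -/
def DupFree (p : PTree) : Prop :=
  p.count RuleName.dupDown = 0 ∧ p.count RuleName.dupUp = 0

/-- Provability of a cirquent in CL5. -/
def ProvesC (C : Cirquent) : Prop := ∃ p : PTree, p.Valid ∧ p.concl = C

/-- Provability of a formula in CL5. -/
def ProvesCL5 (F : Fml) : Prop := ∃ p : PTree, p.Valid ∧ p.concl = fmlCirquent F

/-- Provability of a formula in CL5⁻ (CL5 without duplication). -/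
def ProvesCL5m (F : Fml) : Prop :=
  ∃ p : PTree, p.Valid ∧ DupFree p ∧ p.concl = fmlCirquent F

/-- Number of arcs of a cirquent (sum of the sizes of its ogroups). -/
def Cirquent.arcs (C : Cirquent) : ℕ := (C.groups.map Finset.card).sum

/-- Size of a cirquent: sum of the lengths of the oformulas in its pool plus
the sum of the sizes of its ogroups. -/
def Cirquent.size (C : Cirquent) : ℕ := (C.pool.map Fml.len).sum + C.arcs

/-- Size of a proof: the sum of the sizes of the cirquents it contains. -/
def PTree.size (p : PTree) : ℕ := (p.cirquents.map Cirquent.size).sum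

/-- Total number of positive occurrences of atoms in the pool. -/
def Cirquent.poolPosOcc (C : Cirquent) : ℕ := (C.pool.map Fml.posOcc).sum

end CirquentCalc

namespace CirquentCalc

/-! Vertex-cover reduction. Atom 0 is the fresh atom `q`; the vertices
`v₁, …, vₙ` of the graph double as the atoms `1, …, n`. -/

/-- Disjunction of a list of formulas (with a default for the empty list). -/
def bigOrD (d : Fml) : List Fml → Fml
  | [] => d
  | [a] => a
  | a :: b :: r => Fml.or a (bigOrD d (b :: r))

/-- Conjunction of a list of formulas (with a default for the empty list). -/
def bigAndD (d : Fml) : List Fml → Fml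
  | [] => d
  | [a] => a
  | a :: b :: r => Fml.and a (bigAndD d (b :: r))

/-- ⊥, understood as an abbreviation of P ∧ ¬P (used only in degenerate cases). -/
def botG : Fml := Fml.and (Fml.pos 0) (Fml.neg 0)

/-- ⊤, understood as an abbreviation of P ∨ ¬P (used only in degenerate cases). -/
def topG : Fml := Fml.or (Fml.pos 0) (Fml.neg 0)

/-- Degree of vertex `j`: number of edges incident to it. -/
def deg (E : List (ℕ × ℕ)) (j : ℕ) : ℕ :=
  (E.filter fun e => e.1 == j || e.2 == j).length

/-- Ψ(k) := q ∨ ⋯ ∨ q (k copies). -/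
def PsiF (k : ℕ) : Fml := bigOrD botG (List.replicate k (Fml.pos 0))

/-- Θ(V,E) := ⋁ⱼ (¬q ∧ (¬vⱼ ∨ ⋯ ∨ ¬vⱼ)) with deg(vⱼ) copies of ¬vⱼ. -/
def ThetaF (n : ℕ) (E : List (ℕ × ℕ)) : Fml :=
  bigOrD botG ((List.range n).map fun j =>
    Fml.and (Fml.neg 0)
      (bigOrD botG (List.replicate (deg E (j + 1)) (Fml.neg (j + 1)))))

/-- Ω(E) := (e₁¹ ∨ e₁²) ∧ ⋯ ∧ (eₘ¹ ∨ eₘ²). -/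
def OmegaF (E : List (ℕ × ℕ)) : Fml :=
  bigAndD topG (E.map fun e => Fml.or (Fml.pos e.1) (Fml.pos e.2))

/-- f(V,E,k) := Ψ(k) ∨ Θ(V,E) ∨ Ω(E). -/
def fGraph (n : ℕ) (E : List (ℕ × ℕ)) (k : ℕ) : Fml :=
  Fml.or (PsiF k) (Fml.or (ThetaF n E) (OmegaF E))

/-- The graph with vertices {1,…,n} and edge list E has a vertex cover of size
at most k. -/
def HasVC (n : ℕ) (E : List (ℕ × ℕ)) (k : ℕ) : Prop :=
  ∃ U : Finset ℕ, U ⊆ Finset.Icc 1 n ∧ U.card ≤ k ∧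
    ∀ e ∈ E, e.1 ∈ U ∨ e.2 ∈ U

/-- E is a list of edges on the vertices {1,…,n}: each edge is an (unordered)
pair of distinct vertices. -/
def IsGraph (n : ℕ) (E : List (ℕ × ℕ)) : Prop :=
  ∀ e ∈ E, e.1 ∈ Finset.Icc 1 n ∧ e.2 ∈ Finset.Icc 1 n ∧ e.1 ≠ e.2

end CirquentCalc

namespace CirquentCalc

section VCAux

open Fml

/-- Reachability along a step relation (steps appended at the end). -/
inductive RG (St : ℕ → ℕ → Prop) : ℕ → ℕ → Prop
  | refl (a : ℕ) : RG St a a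
  | snoc {a b c : ℕ} : RG St a b → St b c → RG St a c

theorem RG.cons {St : ℕ → ℕ → Prop} {a b c : ℕ} (h : St a b) (hr : RG St b c) :
    RG St a c := by
  induction hr with
  | refl => exact .snoc (.refl a) h
  | snoc _ hst ih => exact .snoc ih hst

theorem RG.source_eq {St : ℕ → ℕ → Prop}
    (back : ∀ x x' y, St x y → St x' y → x = x')
    {a a' b : ℕ} (h : RG St a b) (h' : RG St a' b)
    (ha : ∀ x, ¬ St x a) (ha' : ∀ x, ¬ St x a') : a = a' := by
  induction h generalizing a' with
  | refl =>
    cases h' with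
    | refl => rfl
    | snoc _ hst => exact absurd hst (ha _)
  | snoc hr hst ih =>
    cases h' with
    | refl => exact absurd hst (ha' _)
    | snoc hr' hst' =>
      cases back _ _ _ hst' hst
      exact ih hr' ha'

/-- "Bad" atoms: least set containing `base` and closed backward under `St`. -/
inductive BadP (St : ℕ → ℕ → Prop) (base : ℕ → Prop) : ℕ → Prop
  | base {a : ℕ} : base a → BadP St base a
  | step {a b : ℕ} : St a b → BadP St base b → BadP St base a

section SubstInv

variable {σ : ℕ → Fml} {s : ℕ → ℕ}

theorem subst_eq_or (hs : ∀ m, σ m = Fml.pos (s m)) {C P Q : Fml}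
    (h : C.subst σ = .or P Q) :
    ∃ C₁ C₂, C = .or C₁ C₂ ∧ C₁.subst σ = P ∧ C₂.subst σ = Q := by
  cases C with
  | pos m => rw [Fml.subst, hs] at h; simp at h
  | neg m => rw [Fml.subst, hs] at h; simp [Fml.negate] at h
  | and a b => simp [Fml.subst] at h
  | or a b =>
    refine ⟨a, b, rfl, ?_, ?_⟩ <;> (injection h)

theorem subst_eq_and (hs : ∀ m, σ m = Fml.pos (s m)) {C P Q : Fml}
    (h : C.subst σ = .and P Q) :
    ∃ C₁ C₂, C = .and C₁ C₂ ∧ C₁.subst σ = P ∧ C₂.subst σ = Q := by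
  cases C with
  | pos m => rw [Fml.subst, hs] at h; simp at h
  | neg m => rw [Fml.subst, hs] at h; simp [Fml.negate] at h
  | or a b => simp [Fml.subst] at h
  | and a b =>
    refine ⟨a, b, rfl, ?_, ?_⟩ <;> (injection h)

theorem subst_eq_pos (hs : ∀ m, σ m = Fml.pos (s m)) {C : Fml} {m : ℕ}
    (h : C.subst σ = .pos m) : ∃ a, C = .pos a ∧ s a = m := by
  cases C with
  | pos a => rw [Fml.subst, hs] at h; exact ⟨a, rfl, by injection h⟩
  | neg a => rw [Fml.subst, hs] at h; simp [Fml.negate] at h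
  | and a b => simp [Fml.subst] at h
  | or a b => simp [Fml.subst] at h

theorem subst_eq_neg (hs : ∀ m, σ m = Fml.pos (s m)) {C : Fml} {m : ℕ}
    (h : C.subst σ = .neg m) : ∃ a, C = .neg a ∧ s a = m := by
  cases C with
  | pos a => rw [Fml.subst, hs] at h; simp at h
  | neg a => rw [Fml.subst, hs] at h; exact ⟨a, rfl, by injection h⟩
  | and a b => simp [Fml.subst] at h
  | or a b => simp [Fml.subst] at h

theorem posOcc_subst (hs : ∀ m, σ m = Fml.pos (s m)) :
    ∀ C : Fml, (C.subst σ).posOcc = C.posOcc := by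
  intro C
  induction C with
  | pos m => rw [Fml.subst, hs]; rfl
  | neg m => rw [Fml.subst, hs]; rfl
  | and a b iha ihb => simp [Fml.subst, Fml.posOcc, iha, ihb]
  | or a b iha ihb => simp [Fml.subst, Fml.posOcc, iha, ihb]

theorem cPos_subst_ge (hs : ∀ m, σ m = Fml.pos (s m)) {a : ℕ} :
    ∀ {C : Fml}, 1 ≤ C.cPos a → 1 ≤ (C.subst σ).cPos (s a) := by
  intro C
  induction C with
  | pos m =>
    intro h
    rw [Fml.cPos] at h
    have hma : m = a := by by_contra hma; simp [hma] at h
    subst hma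
    rw [Fml.subst, hs, Fml.cPos]
    simp
  | neg m => intro h; rw [Fml.cPos] at h; omega
  | and f g ihf ihg =>
    intro h
    rw [Fml.cPos] at h
    rw [Fml.subst, Fml.cPos]
    rcases Nat.lt_or_ge 0 (f.cPos a) with hf | hf
    · have := ihf (by omega); omega
    · have := ihg (by omega); omega
  | or f g ihf ihg =>
    intro h
    rw [Fml.cPos] at h
    rw [Fml.subst, Fml.cPos]
    rcases Nat.lt_or_ge 0 (f.cPos a) with hf | hf
    · have := ihf (by omega); omega
    · have := ihg (by omega); omega

end SubstInv

theorem bigOrD_cons {d a : Fml} {l : List Fml} (hl : l ≠ []) :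
    bigOrD d (a :: l) = .or a (bigOrD d l) := by
  cases l with
  | nil => simp at hl
  | cons b r => rfl

theorem bigAndD_cons {d a : Fml} {l : List Fml} (hl : l ≠ []) :
    bigAndD d (a :: l) = .and a (bigAndD d l) := by
  cases l with
  | nil => simp at hl
  | cons b r => rfl

theorem subst_eq_bigOrD {σ : ℕ → Fml} {s : ℕ → ℕ} (hs : ∀ m, σ m = Fml.pos (s m)) :
    ∀ {L : List Fml} {C d : Fml}, L ≠ [] → C.subst σ = bigOrD d L →
    ∃ Cs : List Fml, Cs.length = L.length ∧ C = bigOrD botG Cs ∧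
      ∀ i (h1 : i < Cs.length) (h2 : i < L.length), (Cs[i]'h1).subst σ = L[i]'h2 := by
  intro L
  induction L with
  | nil => simp
  | cons a l ih =>
    intro C d _ h
    cases l with
    | nil =>
      refine ⟨[C], rfl, rfl, ?_⟩
      intro i h1 h2
      obtain rfl : i = 0 := Nat.lt_one_iff.mp (by simpa using h1)
      simpa [bigOrD] using h
    | cons b r =>
      rw [bigOrD_cons (by simp)] at h
      obtain ⟨C₁, C₂, rfl, hC₁, hC₂⟩ := subst_eq_or hs h
      obtain ⟨Cs, hlen, hCs, hget⟩ := ih (by simp) hC₂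
      have hCsne : Cs ≠ [] := by
        intro hnil; rw [hnil] at hlen; simp at hlen
      refine ⟨C₁ :: Cs, by simp [hlen], ?_, ?_⟩
      · rw [bigOrD_cons hCsne, hCs]
      · intro i h1 h2
        match i with
        | 0 => simpa using hC₁
        | Nat.succ i => simpa using hget i (by simpa using h1) (by simpa using h2)

theorem subst_eq_bigAndD {σ : ℕ → Fml} {s : ℕ → ℕ} (hs : ∀ m, σ m = Fml.pos (s m)) :
    ∀ {L : List Fml} {C d : Fml}, L ≠ [] → C.subst σ = bigAndD d L →
    ∃ Cs : List Fml, Cs.length = L.length ∧ C = bigAndD botG Cs ∧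
      ∀ i (h1 : i < Cs.length) (h2 : i < L.length), (Cs[i]'h1).subst σ = L[i]'h2 := by
  intro L
  induction L with
  | nil => simp
  | cons a l ih =>
    intro C d _ h
    cases l with
    | nil =>
      refine ⟨[C], rfl, rfl, ?_⟩
      intro i h1 h2
      obtain rfl : i = 0 := Nat.lt_one_iff.mp (by simpa using h1)
      simpa [bigAndD] using h
    | cons b r =>
      rw [bigAndD_cons (by simp)] at h
      obtain ⟨C₁, C₂, rfl, hC₁, hC₂⟩ := subst_eq_and hs h
      obtain ⟨Cs, hlen, hCs, hget⟩ := ih (by simp) hC₂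
      have hCsne : Cs ≠ [] := by
        intro hnil; rw [hnil] at hlen; simp at hlen
      refine ⟨C₁ :: Cs, by simp [hlen], ?_, ?_⟩
      · rw [bigAndD_cons hCsne, hCs]
      · intro i h1 h2
        match i with
        | 0 => simpa using hC₁
        | Nat.succ i => simpa using hget i (by simpa using h1) (by simpa using h2)

theorem eval_bigOrD {v : ℕ → Bool} {d : Fml} :
    ∀ {L : List Fml}, L ≠ [] →
      ((bigOrD d L).eval v = true ↔ ∃ F ∈ L, F.eval v = true) := by
  intro L
  induction L with
  | nil => simp
  | cons a l ih =>
    intro _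
    cases l with
    | nil => simp [bigOrD]
    | cons b r =>
      rw [bigOrD_cons (by simp)]
      simp only [Fml.eval, Bool.or_eq_true, ih (by simp)]
      simp

theorem eval_bigAndD_false_of_mem {v : ℕ → Bool} {d : Fml} :
    ∀ {L : List Fml} {F : Fml}, F ∈ L → F.eval v = false →
      (bigAndD d L).eval v = false := by
  intro L
  induction L with
  | nil => simp
  | cons a l ih =>
    intro F hF hFv
    cases l with
    | nil =>
      rcases List.mem_singleton.mp hF with rfl
      simpa [bigAndD] using hFv
    | cons b r =>
      rw [bigAndD_cons (by simp)]
      rcases List.mem_cons.mp hF with rfl | hF'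
      · simp [Fml.eval, hFv]
      · simp [Fml.eval, ih hF' hFv]

theorem cPos_bigOrD (a : ℕ) (d : Fml) :
    ∀ {L : List Fml}, L ≠ [] → (bigOrD d L).cPos a = (L.map (Fml.cPos a)).sum := by
  intro L
  induction L with
  | nil => simp
  | cons x l ih =>
    intro _
    cases l with
    | nil => simp [bigOrD]
    | cons b r => rw [bigOrD_cons (by simp)]; simp [Fml.cPos, ih (by simp)]

theorem cNeg_bigOrD (a : ℕ) (d : Fml) :
    ∀ {L : List Fml}, L ≠ [] → (bigOrD d L).cNeg a = (L.map (Fml.cNeg a)).sum := by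
  intro L
  induction L with
  | nil => simp
  | cons x l ih =>
    intro _
    cases l with
    | nil => simp [bigOrD]
    | cons b r => rw [bigOrD_cons (by simp)]; simp [Fml.cNeg, ih (by simp)]

theorem posOcc_bigOrD (d : Fml) :
    ∀ {L : List Fml}, L ≠ [] → (bigOrD d L).posOcc = (L.map Fml.posOcc).sum := by
  intro L
  induction L with
  | nil => simp
  | cons x l ih =>
    intro _
    cases l with
    | nil => simp [bigOrD]
    | cons b r => rw [bigOrD_cons (by simp)]; simp [Fml.posOcc, ih (by simp)]

theorem one_le_sum_map {f : Fml → ℕ} {L : List Fml} {M : Fml}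
    (hM : M ∈ L) (h : 1 ≤ f M) : 1 ≤ (L.map f).sum :=
  le_trans h (List.single_le_sum (fun _ _ => Nat.zero_le _) _ (List.mem_map_of_mem (f := f) hM))

theorem two_le_sum_map {f : Fml → ℕ} :
    ∀ {L : List Fml} {i j : ℕ} (hi : i < L.length) (hj : j < L.length), i ≠ j →
      1 ≤ f (L[i]'hi) → 1 ≤ f (L[j]'hj) → 2 ≤ (L.map f).sum := by
  intro L
  induction L with
  | nil => intro i j hi; simp at hi
  | cons a l ih =>
    intro i j hi hj hij h1 h2
    simp only [List.map_cons, List.sum_cons]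
    match i, j with
    | 0, 0 => omega
    | 0, j+1 =>
      have : 1 ≤ (l.map f).sum :=
        one_le_sum_map (List.getElem_mem _) h2
      simp at h1
      omega
    | i+1, 0 =>
      have : 1 ≤ (l.map f).sum :=
        one_le_sum_map (List.getElem_mem _) h1
      simp at h2
      omega
    | i+1, j+1 =>
      have := ih (i := i) (j := j) (by simpa using hi) (by simpa using hj)
        (by omega) (by simpa using h1) (by simpa using h2)
      omega

/-- The finite set of atoms with a positive occurrence. -/
def posAtoms : Fml → Finset ℕ
  | .pos n => {n}
  | .neg _ => ∅
  | .and f g => posAtoms f ∪ posAtoms g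
  | .or f g => posAtoms f ∪ posAtoms g

theorem mem_posAtoms {a : ℕ} : ∀ {F : Fml}, a ∈ posAtoms F ↔ 1 ≤ F.cPos a := by
  intro F
  induction F with
  | pos n =>
    simp only [posAtoms, Finset.mem_singleton, Fml.cPos]
    constructor
    · rintro rfl; simp
    · intro h; by_contra hne; simp [Ne.symm hne] at h
  | neg n => simp [posAtoms, Fml.cPos]
  | and f g ihf ihg =>
    simp only [posAtoms, Finset.mem_union, Fml.cPos, ihf, ihg]; omega
  | or f g ihf ihg =>
    simp only [posAtoms, Finset.mem_union, Fml.cPos, ihf, ihg]; omega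

theorem card_posAtoms_le : ∀ F : Fml, (posAtoms F).card ≤ F.posOcc := by
  intro F
  induction F with
  | pos n => simp [posAtoms, Fml.posOcc]
  | neg n => simp [posAtoms, Fml.posOcc]
  | and f g ihf ihg =>
    have := Finset.card_union_le (posAtoms f) (posAtoms g)
    simp only [posAtoms, Fml.posOcc]
    omega
  | or f g ihf ihg =>
    have := Finset.card_union_le (posAtoms f) (posAtoms g)
    simp only [posAtoms, Fml.posOcc]
    omega

theorem replicate_pos_ne_nil {k : ℕ} (hk : 1 ≤ k) {F : Fml} :
    List.replicate k F ≠ [] := by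
  intro hnil
  have := congrArg List.length hnil
  simp at this
  omega

theorem psiF_posOcc {k : ℕ} (hk : 1 ≤ k) : (PsiF k).posOcc = k := by
  rw [PsiF, posOcc_bigOrD _ (replicate_pos_ne_nil hk)]
  simp [List.map_replicate, Fml.posOcc]

theorem psiF_cPos {k m : ℕ} (hm : m ≠ 0) : (PsiF k).cPos m = 0 := by
  rcases Nat.eq_zero_or_pos k with rfl | hk
  · simp [PsiF, bigOrD, botG, Fml.cPos, hm, Ne.symm hm]
  · rw [PsiF, cPos_bigOrD _ _ (replicate_pos_ne_nil hk)]
    simp [List.map_replicate, Fml.cPos, Ne.symm hm]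

theorem psiF_eq_and {k : ℕ} {P Q : Fml} (h : Fml.and P Q = PsiF k) :
    k = 0 ∧ P = .pos 0 ∧ Q = .neg 0 := by
  match k with
  | 0 =>
    simp only [PsiF, List.replicate, bigOrD, botG] at h
    injection h with h1 h2
    exact ⟨rfl, h1, h2⟩
  | 1 => simp [PsiF, List.replicate, bigOrD] at h
  | (k+2) =>
    rw [PsiF, show List.replicate (k+2) (Fml.pos 0) =
        Fml.pos 0 :: List.replicate (k+1) (Fml.pos 0) from rfl,
      bigOrD_cons (by simp)] at h
    simp at h

theorem bigOr_replicate_neg_eq_and {d t : ℕ} {P Q : Fml}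
    (h : Fml.and P Q = bigOrD botG (List.replicate d (Fml.neg t))) :
    d = 0 ∧ P = .pos 0 ∧ Q = .neg 0 := by
  match d with
  | 0 =>
    simp only [List.replicate, bigOrD, botG] at h
    injection h with h1 h2
    exact ⟨rfl, h1, h2⟩
  | 1 => simp [List.replicate, bigOrD] at h
  | (d+2) =>
    rw [show List.replicate (d+2) (Fml.neg t) =
        Fml.neg t :: List.replicate (d+1) (Fml.neg t) from rfl,
      bigOrD_cons (replicate_pos_ne_nil (by omega))] at h
    simp at h

end VCAux

end CirquentCalc

open CirquentCalc

/-- If f(V,E,k) is an atomic-level instance of a normal binary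
tautology, then G has a vertex cover of size at most k. -/
theorem instance_implies_vertex_cover (n k : ℕ) (E : List (ℕ × ℕ)) (hG : IsGraph n E)
    (h : ∃ B : Fml, Binary B ∧ Normal B ∧ Tautology B ∧
      AtomicInstanceOf (fGraph n E k) B) :
    HasVC n E k := by
  classical
  obtain ⟨B, _hBin, hNor, hTaut, σ, hσAt, hsub⟩ := h
  choose s hs using hσAt
  by_cases hE : E = []
  · subst hE
    exact ⟨∅, by simp, by simp, by simp⟩
  obtain ⟨e₀, he₀⟩ := List.exists_mem_of_ne_nil E hE
  have hn1 : 1 ≤ n := by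
    have := (hG e₀ he₀).1
    simp only [Finset.mem_Icc] at this
    omega
  rw [show fGraph n E k = Fml.or (PsiF k) (Fml.or (ThetaF n E) (OmegaF E)) from rfl] at hsub
  obtain ⟨B₁, B₂₃, rfl, h1, h23⟩ := subst_eq_or hs hsub
  obtain ⟨B₂, B₃, rfl, h2, h3⟩ := subst_eq_or hs h23
  -- Θ decomposition
  have hTlne : ((List.range n).map (fun j =>
      Fml.and (Fml.neg 0) (bigOrD botG (List.replicate (deg E (j + 1)) (Fml.neg (j + 1)))))) ≠ [] := by
    simp
    omega
  obtain ⟨Ds, hDlen0, hDeq, hDget⟩ := subst_eq_bigOrD hs hTlne (h2.trans rfl)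
  have hDlen : Ds.length = n := by simpa using hDlen0
  have hDsne : Ds ≠ [] := by
    intro h0; rw [h0] at hDlen; simp at hDlen; omega
  have hDs : ∀ j (hj : j < n), ∃ r D, Ds[j]'(by omega) = Fml.and (Fml.neg r) D ∧ s r = 0 ∧
      D.subst σ = bigOrD botG (List.replicate (deg E (j+1)) (Fml.neg (j+1))) := by
    intro j hj
    have hg := hDget j (by omega) (by simpa using hj)
    rw [List.getElem_map, List.getElem_range] at hg
    obtain ⟨A, D, hAD, hA, hD⟩ := subst_eq_and hs hg
    obtain ⟨r, rfl, hr⟩ := subst_eq_neg hs hA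
    exact ⟨r, D, hAD, hr, hD⟩
  choose rA DD hDs1 hDs2 hDs3 using hDs
  -- Ω decomposition
  obtain ⟨Cs, hClen0, hCeq, hCget⟩ := subst_eq_bigAndD hs (by simpa using hE) (h3.trans rfl)
  have hClen : Cs.length = E.length := by simpa using hClen0
  have hCs : ∀ i (hi : i < E.length), ∃ a b,
      Cs[i]'(by omega) = Fml.or (Fml.pos a) (Fml.pos b) ∧
        s a = (E[i]'hi).1 ∧ s b = (E[i]'hi).2 := by
    intro i hi
    have hg := hCget i (by omega) (by simpa using hi)
    rw [List.getElem_map] at hg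
    obtain ⟨A, Bb, hAB, hA, hB⟩ := subst_eq_or hs hg
    obtain ⟨a, rfl, ha⟩ := subst_eq_pos hs hA
    obtain ⟨b, rfl, hb⟩ := subst_eq_pos hs hB
    exact ⟨a, b, hAB, ha, hb⟩
  choose eA eB hCs1 hCs2 hCs3 using hCs
  -- counting facts
  have hcNeg : ∀ a, Fml.cNeg a B₁ + (Fml.cNeg a B₂ + Fml.cNeg a B₃) ≤ 1 := by
    intro a
    have := (hNor a).2
    simpa [Fml.cNeg] using this
  have hB2neg : ∀ a, Fml.cNeg a B₂ = (Ds.map (Fml.cNeg a)).sum := by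
    intro a
    rw [hDeq, cNeg_bigOrD a botG hDsne]
  have hDneg1 : ∀ j (hj : j < n), 1 ≤ Fml.cNeg (rA j hj) (Ds[j]'(by omega)) := by
    intro j hj
    rw [hDs1 j hj]
    simp [Fml.cNeg]
  have memNeg : ∀ (M : Fml), M ∈ Ds → ∀ a, 1 ≤ Fml.cNeg a M → 1 ≤ Fml.cNeg a B₂ := by
    intro M hM a hle
    rw [hB2neg]
    exact one_le_sum_map hM hle
  have idxNe2 : ∀ (j j' : ℕ) (hj : j < Ds.length) (hj' : j' < Ds.length), j ≠ j' → ∀ a,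
      1 ≤ Fml.cNeg a (Ds[j]'hj) → 1 ≤ Fml.cNeg a (Ds[j']'hj') → 2 ≤ Fml.cNeg a B₂ := by
    intro j j' hj hj' hne a hx hy
    rw [hB2neg]
    exact two_le_sum_map hj hj' hne hx hy
  have hrAinj : ∀ j (hj : j < n) j' (hj' : j' < n), rA j hj = rA j' hj' → j = j' := by
    intro j hj j' hj' heq
    by_contra hne
    have h2le := idxNe2 j j' (by omega) (by omega) hne (rA j hj) (hDneg1 j hj)
      (by rw [heq]; exact hDneg1 j' hj')
    have := hcNeg (rA j hj)
    omega
  have hB1pos0 : ∀ α, 1 ≤ Fml.cPos α B₁ → s α = 0 := by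
    intro α hα
    have hof := cPos_subst_ge hs hα
    rw [h1] at hof
    by_contra h0
    rw [psiF_cPos h0] at hof
    omega
  -- the step relation
  set St : ℕ → ℕ → Prop := fun α γ =>
    B₁ = Fml.and (Fml.pos α) (Fml.neg γ) ∨
    ∃ rr, (Fml.and (Fml.neg rr) (Fml.and (Fml.pos α) (Fml.neg γ))) ∈ Ds with hStdef
  have hStZero : ∀ α γ, St α γ → s α = 0 ∧ s γ = 0 := by
    intro α γ hst
    rcases hst with hB | ⟨rr, hmem⟩
    · have h1' := h1
      rw [hB] at h1'
      simp only [Fml.subst, hs, Fml.negate] at h1'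
      obtain ⟨_, hP, hQ⟩ := psiF_eq_and h1'
      constructor
      · injection hP
      · injection hQ
    · obtain ⟨j, hjlen, hMj⟩ := List.mem_iff_getElem.mp hmem
      have hjn : j < n := by omega
      have heq : Fml.and (Fml.neg (rA j hjn)) (DD j hjn) =
          Fml.and (Fml.neg rr) (Fml.and (Fml.pos α) (Fml.neg γ)) := by
        rw [← hDs1 j hjn]
        exact hMj
      have hDD : DD j hjn = Fml.and (Fml.pos α) (Fml.neg γ) := by
        injection heq with u1 u2
      have hsubDD := hDs3 j hjn
      rw [hDD] at hsubDD
      simp only [Fml.subst, hs, Fml.negate] at hsubDD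
      obtain ⟨_, hP, hQ⟩ := bigOr_replicate_neg_eq_and hsubDD
      constructor
      · injection hP
      · injection hQ
  have hBack : ∀ x x' y, St x y → St x' y → x = x' := by
    intro x x' y hxy hx'y
    rcases hxy with hB | ⟨rr, hmem⟩ <;> rcases hx'y with hB' | ⟨rr', hmem'⟩
    · rw [hB] at hB'
      injection hB' with u1 u2
      injection u1
    · exfalso
      have c1 : 1 ≤ Fml.cNeg y B₁ := by rw [hB]; simp [Fml.cNeg]
      have c2 : 1 ≤ Fml.cNeg y B₂ := memNeg _ hmem' y (by simp [Fml.cNeg])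
      have := hcNeg y
      omega
    · exfalso
      have c1 : 1 ≤ Fml.cNeg y B₁ := by rw [hB']; simp [Fml.cNeg]
      have c2 : 1 ≤ Fml.cNeg y B₂ := memNeg _ hmem y (by simp [Fml.cNeg])
      have := hcNeg y
      omega
    · obtain ⟨j, hjlen, hMj⟩ := List.mem_iff_getElem.mp hmem
      obtain ⟨j', hjlen', hMj'⟩ := List.mem_iff_getElem.mp hmem'
      by_cases hjj : j = j'
      · subst hjj
        have : Fml.and (Fml.neg rr) (Fml.and (Fml.pos x) (Fml.neg y)) =
            Fml.and (Fml.neg rr') (Fml.and (Fml.pos x') (Fml.neg y)) := by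
          rw [← hMj, ← hMj']
        injection this with u1 u2
        injection u2 with u3 u4
        injection u3
      · exfalso
        have h2le : 2 ≤ Fml.cNeg y B₂ := idxNe2 j j' hjlen hjlen' hjj y
          (by rw [hMj]; simp [Fml.cNeg]) (by rw [hMj']; simp [Fml.cNeg])
        have := hcNeg y
        omega
  have hNoSt : ∀ j (hj : j < n) x, ¬ St x (rA j hj) := by
    intro j hj x hst
    rcases hst with hB | ⟨rr, hmem⟩
    · have c1 : 1 ≤ Fml.cNeg (rA j hj) B₁ := by rw [hB]; simp [Fml.cNeg]
      have hmemDj : Ds[j]'(by omega) ∈ Ds := List.getElem_mem _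
      have c2 : 1 ≤ Fml.cNeg (rA j hj) B₂ :=
        memNeg _ hmemDj _ (hDneg1 j hj)
      have := hcNeg (rA j hj)
      omega
    · obtain ⟨j₂, hj₂, hMj₂⟩ := List.mem_iff_getElem.mp hmem
      by_cases hjj : j₂ = j
      · subst hjj
        have heq : Fml.and (Fml.neg (rA j₂ hj)) (DD j₂ hj) =
            Fml.and (Fml.neg rr) (Fml.and (Fml.pos x) (Fml.neg (rA j₂ hj))) := by
          rw [← hDs1 j₂ hj]
          exact hMj₂
        have hrr : Fml.neg (rA j₂ hj) = Fml.neg rr := by injection heq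
        have hDD : DD j₂ hj = Fml.and (Fml.pos x) (Fml.neg (rA j₂ hj)) := by
          injection heq
        have c2 : 2 ≤ Fml.cNeg (rA j₂ hj) (Ds[j₂]'(by omega)) := by
          rw [hDs1 j₂ hj, hDD]
          simp [Fml.cNeg]
        have c2' : 2 ≤ Fml.cNeg (rA j₂ hj) B₂ := by
          rw [hB2neg]
          calc 2 ≤ Fml.cNeg (rA j₂ hj) (Ds[j₂]'(by omega)) := c2
            _ ≤ (Ds.map (Fml.cNeg (rA j₂ hj))).sum :=
              List.single_le_sum (fun _ _ => Nat.zero_le _) _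
                (List.mem_map_of_mem (f := Fml.cNeg (rA j₂ hj)) (List.getElem_mem _))
        have := hcNeg (rA j₂ hj)
        omega
      · have h2le : 2 ≤ Fml.cNeg (rA j hj) B₂ := idxNe2 j₂ j hj₂ (by omega) hjj _
          (by rw [hMj₂]; simp [Fml.cNeg]) (hDneg1 j hj)
        have := hcNeg (rA j hj)
        omega
  -- the cover predicate
  set P : ℕ → Prop := fun j => ∃ hj : j < n, 1 ≤ k ∧
    ∃ β, RG St (rA j hj) β ∧ 1 ≤ Fml.cPos β B₁ with hPdef
  -- per-edge main lemma
  have hMain : ∀ e ∈ E, ∃ j, j < n ∧ (j + 1 = e.1 ∨ j + 1 = e.2) ∧ P j := by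
    intro e he
    obtain ⟨i, hi, hei⟩ := List.mem_iff_getElem.mp he
    set base : ℕ → Prop := fun a => a = eA i hi ∨ a = eB i hi ∨
      (1 ≤ k ∧ 1 ≤ Fml.cPos a B₁) with hbase
    set v : ℕ → Bool := fun a => if BadP St base a then false else true with hvdef
    have hvfalse : ∀ a, v a = false ↔ BadP St base a := by
      intro a
      by_cases hb : BadP St base a <;> simp [hvdef, hb]
    have hsEA : s (eA i hi) = e.1 := by rw [hCs2 i hi, hei]
    have hsEB : s (eB i hi) = e.2 := by rw [hCs3 i hi, hei]
    have he1pos : 1 ≤ e.1 := by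
      have := (hG e he).1
      simp only [Finset.mem_Icc] at this
      omega
    have he2pos : 1 ≤ e.2 := by
      have := (hG e he).2.1
      simp only [Finset.mem_Icc] at this
      omega
    have hBadPos : ∀ α, BadP St base α → s α ≠ 0 → α = eA i hi ∨ α = eB i hi := by
      intro α hbad hs0
      cases hbad with
      | base hb =>
        rcases hb with h | h | ⟨hk, hc⟩
        · exact Or.inl h
        · exact Or.inr h
        · exact absurd (hB1pos0 α hc) hs0
      | step hst _ => exact absurd (hStZero _ _ hst).1 hs0
    have hBadZero : ∀ α, BadP St base α → s α = 0 →
        1 ≤ k ∧ ∃ β, RG St α β ∧ 1 ≤ Fml.cPos β B₁ := by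
      intro α hbad
      induction hbad with
      | base hb =>
        intro h0
        rcases hb with rfl | rfl | ⟨hk, hc⟩
        · rw [hsEA] at h0; omega
        · rw [hsEB] at h0; omega
        · exact ⟨hk, _, .refl _, hc⟩
      | step hst hbad ih =>
        intro _
        obtain ⟨hk, β, hr, hc⟩ := ih (hStZero _ _ hst).2
        exact ⟨hk, β, RG.cons hst hr, hc⟩
    have hT := hTaut v
    -- B₁ is false under v
    have hB1f : B₁.eval v = false := by
      rcases Nat.eq_zero_or_pos k with hk0 | hk1
      · have h1' : B₁.subst σ = Fml.and (Fml.pos 0) (Fml.neg 0) := by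
          rw [h1, hk0]; decide
        obtain ⟨X, Y, hXY, hX, hY⟩ := subst_eq_and hs h1'
        obtain ⟨x, rfl, hx⟩ := subst_eq_pos hs hX
        obtain ⟨y, rfl, hy⟩ := subst_eq_neg hs hY
        rw [hXY]
        simp only [Fml.eval]
        by_cases hyv : BadP St base y
        · have hbadx : BadP St base x := .step (Or.inl hXY) hyv
          have := (hvfalse x).mpr hbadx
          simp [this]
        · have hyt : v y = true := by
            by_contra hc
            exact hyv ((hvfalse y).mp (by revert hc; cases v y <;> simp))
          simp [hyt]
      · have hrep : (List.replicate k (Fml.pos 0)) ≠ [] := replicate_pos_ne_nil hk1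
        obtain ⟨Ps, hPlen, hPeq, hPget⟩ := subst_eq_bigOrD hs hrep (h1.trans rfl)
        have hPsne : Ps ≠ [] := by
          intro h0; rw [h0] at hPlen; simp at hPlen; omega
        rw [hPeq]
        by_contra hT1
        rw [Bool.not_eq_false] at hT1
        obtain ⟨F, hF, hFv⟩ := (eval_bigOrD hPsne).mp hT1
        obtain ⟨t, ht, hFt⟩ := List.mem_iff_getElem.mp hF
        have hsubF := hPget t ht (by rw [← hPlen]; exact ht)
        rw [List.getElem_replicate] at hsubF
        obtain ⟨a, hFa, ha0⟩ := subst_eq_pos hs hsubF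
        have hmema : Fml.pos a ∈ Ps := hFa ▸ List.getElem_mem ht
        have hc : 1 ≤ Fml.cPos a B₁ := by
          rw [hPeq, cPos_bigOrD a botG hPsne]
          exact one_le_sum_map hmema (by simp [Fml.cPos])
        have hbad : BadP St base a := .base (Or.inr (Or.inr ⟨hk1, hc⟩))
        have hFa' : F = Fml.pos a := by rw [← hFt, hFa]
        rw [hFa'] at hFv
        simp only [Fml.eval] at hFv
        rw [(hvfalse a).mpr hbad] at hFv
        simp at hFv
    -- B₃ is false under v
    have hB3f : B₃.eval v = false := by
      have hbadA : BadP St base (eA i hi) := .base (Or.inl rfl)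
      have hbadB : BadP St base (eB i hi) := .base (Or.inr (Or.inl rfl))
      have hCsi : (Cs[i]'(by omega)).eval v = false := by
        rw [hCs1 i hi]
        simp only [Fml.eval]
        rw [(hvfalse _).mpr hbadA, (hvfalse _).mpr hbadB]
        rfl
      rw [hCeq]
      exact eval_bigAndD_false_of_mem (List.getElem_mem _) hCsi
    -- hence B₂ is true under v
    have hB2t : B₂.eval v = true := by
      simp only [Fml.eval, hB1f, hB3f, Bool.false_or, Bool.or_false] at hT
      exact hT
    rw [hDeq] at hB2t
    obtain ⟨F, hF, hFv⟩ := (eval_bigOrD hDsne).mp hB2t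
    obtain ⟨j, hjlen, hFj⟩ := List.mem_iff_getElem.mp hF
    have hjn : j < n := by omega
    have hFshape : F = Fml.and (Fml.neg (rA j hjn)) (DD j hjn) := by
      rw [← hFj]
      exact hDs1 j hjn
    rw [hFshape] at hFv
    simp only [Fml.eval, Bool.and_eq_true] at hFv
    obtain ⟨hrv, hDv⟩ := hFv
    have hbadr : BadP St base (rA j hjn) := (hvfalse _).mp (by
      revert hrv; cases v (rA j hjn) <;> simp)
    have hPj : P j := ⟨hjn, hBadZero _ hbadr (hDs2 j hjn)⟩
    have hsubDD := hDs3 j hjn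
    cases hd : deg E (j+1) with
    | zero =>
      exfalso
      rw [hd] at hsubDD
      have hsubDD' : (DD j hjn).subst σ = Fml.and (Fml.pos 0) (Fml.neg 0) := hsubDD
      obtain ⟨X, Y, hXY, hX, hY⟩ := subst_eq_and hs hsubDD'
      obtain ⟨x, rfl, hx⟩ := subst_eq_pos hs hX
      obtain ⟨y, rfl, hy⟩ := subst_eq_neg hs hY
      rw [hXY] at hDv
      simp only [Fml.eval, Bool.and_eq_true] at hDv
      obtain ⟨hxv, hyv⟩ := hDv
      have hbady : BadP St base y := (hvfalse y).mp (by
        revert hyv; cases v y <;> simp)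
      have hmemD : Fml.and (Fml.neg (rA j hjn)) (Fml.and (Fml.pos x) (Fml.neg y)) ∈ Ds := by
        have : Ds[j]'(by omega) = Fml.and (Fml.neg (rA j hjn)) (Fml.and (Fml.pos x) (Fml.neg y)) := by
          rw [hDs1 j hjn, hXY]
        exact this ▸ List.getElem_mem _
      have hstep : St x y := Or.inr ⟨rA j hjn, hmemD⟩
      have hbadx : BadP St base x := .step hstep hbady
      rw [(hvfalse x).mpr hbadx] at hxv
      simp at hxv
    | succ d =>
      rw [hd] at hsubDD
      have hrepne : List.replicate (d+1) (Fml.neg (j+1)) ≠ [] := replicate_pos_ne_nil (by omega)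
      obtain ⟨Ns, hNlen, hNeq, hNget⟩ := subst_eq_bigOrD hs hrepne hsubDD
      have hNsne : Ns ≠ [] := by
        intro h0; rw [h0] at hNlen; simp at hNlen
      rw [hNeq] at hDv
      obtain ⟨G, hGmem, hGv⟩ := (eval_bigOrD hNsne).mp hDv
      obtain ⟨t, ht, hGt⟩ := List.mem_iff_getElem.mp hGmem
      have hsubG := hNget t ht (by rw [← hNlen]; exact ht)
      rw [List.getElem_replicate] at hsubG
      obtain ⟨s', hGs, hs'⟩ := subst_eq_neg hs hsubG
      have hGshape : G = Fml.neg s' := by rw [← hGt, hGs]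
      rw [hGshape] at hGv
      simp only [Fml.eval] at hGv
      have hbads : BadP St base s' := (hvfalse s').mp (by
        revert hGv; cases v s' <;> simp)
      have hne0 : s s' ≠ 0 := by rw [hs']; omega
      rcases hBadPos s' hbads hne0 with rfl | rfl
      · exact ⟨j, hjn, Or.inl (by rw [← hs']; exact hsEA), hPj⟩
      · exact ⟨j, hjn, Or.inr (by rw [← hs']; exact hsEB), hPj⟩
  -- assemble the vertex cover
  refine ⟨((Finset.range n).filter P).image (· + 1), ?_, ?_, ?_⟩
  · intro x hx
    simp only [Finset.mem_image, Finset.mem_filter, Finset.mem_range] at hx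
    obtain ⟨j, ⟨hj, _⟩, rfl⟩ := hx
    simp only [Finset.mem_Icc]
    omega
  · have hcard1 : (((Finset.range n).filter P).image (· + 1)).card ≤
        ((Finset.range n).filter P).card := Finset.card_image_le
    rcases Finset.eq_empty_or_nonempty ((Finset.range n).filter P) with hemp | ⟨j₀, hj₀⟩
    · have h0 : ((Finset.range n).filter P).card = 0 := by rw [hemp]; rfl
      omega
    · obtain ⟨hj₀n, hk1, _⟩ := (Finset.mem_filter.mp hj₀).2
      set g : ℕ → ℕ := fun j => if h : P j then h.choose_spec.2.choose else 0 with hgdef2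
      have hgdef : ∀ j, P j → ∃ hj : j < n, RG St (rA j hj) (g j) ∧
          1 ≤ Fml.cPos (g j) B₁ := by
        intro j hPj
        simp only [hgdef2]
        rw [dif_pos hPj]
        exact ⟨hPj.choose, hPj.choose_spec.2.choose_spec⟩
      have hcard2 : ((Finset.range n).filter P).card ≤ (posAtoms B₁).card := by
        apply Finset.card_le_card_of_injOn g
        · intro j hj
          obtain ⟨hjn, hrg, hc⟩ := hgdef j (Finset.mem_filter.mp hj).2
          exact mem_posAtoms.mpr hc
        · intro j hjm j' hjm' heq
          obtain ⟨hjn, hrg, hc⟩ := hgdef j (Finset.mem_filter.mp hjm).2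
          obtain ⟨hjn', hrg', hc'⟩ := hgdef j' (Finset.mem_filter.mp hjm').2
          rw [heq] at hrg
          exact hrAinj j hjn j' hjn'
            (RG.source_eq hBack hrg hrg' (hNoSt j hjn) (hNoSt j' hjn'))
      have hcard3 : (posAtoms B₁).card ≤ Fml.posOcc B₁ := card_posAtoms_le B₁
      have hcard4 : Fml.posOcc B₁ = k := by
        have := posOcc_subst hs B₁
        rw [h1, psiF_posOcc hk1] at this
        omega
      omega
  · intro e he
    obtain ⟨j, hjn, hor, hPj⟩ := hMain e he
    have hjU : j + 1 ∈ ((Finset.range n).filter P).image (· + 1) := by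
      simp only [Finset.mem_image, Finset.mem_filter, Finset.mem_range]
      exact ⟨j, ⟨hjn, hPj⟩, rfl⟩
    rcases hor with h | h
    · left; rw [← h]; exact hjU
    · right; rw [← h]; exact hjU
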